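/- Consider the weight lattice of G2 in fundamental-weight coordinates, with Cartan matrix A = [[2,-3],[-1,2]] (so the simple reflection s_i acts on coordinates by μ ↦ μ - μ_i·(i-th column of A applied appropriately, i.e. s_i(μ) = μ - ⟨μ,β_i^∨⟩β_i). For a real parameter x ≥ 0, let λ(x) = (1/2 - 3x, 2x). Then the unique dominant element in the W(G2)-orbit of λ(x) has some coordinate strictly greater than 1 if and only if x > 3/2. -/
import Mathlib
set_option linter.unreachableTactic false
set_option linter.unusedTactic false

/-- Orbit of (1/2-3x, 2x) under the G2 Weyl group in fundamental weight coords. -/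
def G2P (x : ℝ) (v : Fin 2 → ℝ) : Prop :=
    (v 0 = 1/2 - 3*x ∧ v 1 = 2*x) ∨
    (v 0 = 3*x - 1/2 ∧ v 1 = 1/2 - x) ∨
    (v 0 = 1/2 + 3*x ∧ v 1 = -(2*x)) ∨
    (v 0 = 1 ∧ v 1 = x - 1/2) ∨
    (v 0 = -(1/2) - 3*x ∧ v 1 = 1/2 + x) ∨
    (v 0 = -1 ∧ v 1 = x + 1/2) ∨
    (v 0 = 1 ∧ v 1 = -(1/2) - x) ∨
    (v 0 = 3*x + 1/2 ∧ v 1 = -x - 1/2) ∨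
    (v 0 = -1 ∧ v 1 = 1/2 - x) ∨
    (v 0 = -(3*x) - 1/2 ∧ v 1 = 2*x) ∨
    (v 0 = 1/2 - 3*x ∧ v 1 = x - 1/2) ∨
    (v 0 = 3*x - 1/2 ∧ v 1 = -(2*x))

/-- G2 in fundamental-weight coordinates: β₁ = (2,-1), β₂ = (-3,2), the simple
reflection sᵢ acts by μ ↦ μ - μᵢ βᵢ. For x ≥ 0 and λ(x) = (1/2 - 3x, 2x), any
dominant element of the Weyl orbit of λ(x) has some coordinate > 1 iff x > 3/2. -/
theorem stmt_15 (x : ℝ) (hx : 0 ≤ x)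
    (β : Fin 2 → Fin 2 → ℝ) (hβ : β = ![![2,-1], ![-3,2]])
    (refl : Fin 2 → (Fin 2 → ℝ) → (Fin 2 → ℝ))
    (hrefl : ∀ (i : Fin 2) (μ : Fin 2 → ℝ) (j : Fin 2),
      refl i μ j = μ j - μ i * β i j)
    (lam : Fin 2 → ℝ) (hlam : lam = ![1/2 - 3*x, 2*x])
    (μ : Fin 2 → ℝ)
    (horb : Relation.EqvGen (fun a b => ∃ i, b = refl i a) lam μ)
    (hdom : ∀ j, 0 ≤ μ j) :
    (∃ j, 1 < μ j) ↔ 3/2 < x := by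
  subst hβ
  have h2 : ∀ i : Fin 2, i = 0 ∨ i = 1 := by decide
  have r00 : ∀ ν : Fin 2 → ℝ, refl 0 ν 0 = -(ν 0) := by
    intro ν; rw [hrefl]; norm_num; ring
  have r01 : ∀ ν : Fin 2 → ℝ, refl 0 ν 1 = ν 0 + ν 1 := by
    intro ν; rw [hrefl]; norm_num; ring
  have r10 : ∀ ν : Fin 2 → ℝ, refl 1 ν 0 = ν 0 + 3 * ν 1 := by
    intro ν; rw [hrefl]; norm_num; ring
  have r11 : ∀ ν : Fin 2 → ℝ, refl 1 ν 1 = -(ν 1) := by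
    intro ν; rw [hrefl]; norm_num; ring
  have hinv : ∀ (i : Fin 2) (ν : Fin 2 → ℝ), refl i (refl i ν) = ν := by
    intro i ν
    funext j
    rcases h2 i with rfl | rfl <;> rcases h2 j with rfl | rfl <;>
      simp only [r00, r01, r10, r11] <;> ring
  have step0 : ∀ ν, G2P x ν → G2P x (refl 0 ν) := by
    intro ν h
    unfold G2P at h ⊢
    rcases h with ⟨h0,h1⟩|⟨h0,h1⟩|⟨h0,h1⟩|⟨h0,h1⟩|⟨h0,h1⟩|⟨h0,h1⟩|⟨h0,h1⟩|⟨h0,h1⟩|⟨h0,h1⟩|⟨h0,h1⟩|⟨h0,h1⟩|⟨h0,h1⟩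
    · exact Or.inr (Or.inl ⟨by rw [r00, h0]; try ring, by rw [r01, h0, h1]; try ring⟩)
    · exact Or.inl ⟨by rw [r00, h0]; try ring, by rw [r01, h0, h1]; try ring⟩
    · exact Or.inr (Or.inr (Or.inr (Or.inr (Or.inl ⟨by rw [r00, h0]; try ring, by rw [r01, h0, h1]; try ring⟩))))
    · exact Or.inr (Or.inr (Or.inr (Or.inr (Or.inr (Or.inl ⟨by rw [r00, h0]; try ring, by rw [r01, h0, h1]; try ring⟩)))))
    · exact Or.inr (Or.inr (Or.inl ⟨by rw [r00, h0]; try ring, by rw [r01, h0, h1]; try ring⟩))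
    · exact Or.inr (Or.inr (Or.inr (Or.inl ⟨by rw [r00, h0]; try ring, by rw [r01, h0, h1]; try ring⟩)))
    · exact Or.inr (Or.inr (Or.inr (Or.inr (Or.inr (Or.inr (Or.inr (Or.inr (Or.inl ⟨by rw [r00, h0]; try ring, by rw [r01, h0, h1]; try ring⟩))))))))
    · exact Or.inr (Or.inr (Or.inr (Or.inr (Or.inr (Or.inr (Or.inr (Or.inr (Or.inr (Or.inl ⟨by rw [r00, h0]; try ring, by rw [r01, h0, h1]; try ring⟩)))))))))
    · exact Or.inr (Or.inr (Or.inr (Or.inr (Or.inr (Or.inr (Or.inl ⟨by rw [r00, h0]; try ring, by rw [r01, h0, h1]; try ring⟩))))))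
    · exact Or.inr (Or.inr (Or.inr (Or.inr (Or.inr (Or.inr (Or.inr (Or.inl ⟨by rw [r00, h0]; try ring, by rw [r01, h0, h1]; try ring⟩)))))))
    · exact Or.inr (Or.inr (Or.inr (Or.inr (Or.inr (Or.inr (Or.inr (Or.inr (Or.inr (Or.inr (Or.inr (⟨by rw [r00, h0]; try ring, by rw [r01, h0, h1]; try ring⟩)))))))))))
    · exact Or.inr (Or.inr (Or.inr (Or.inr (Or.inr (Or.inr (Or.inr (Or.inr (Or.inr (Or.inr (Or.inl ⟨by rw [r00, h0]; try ring, by rw [r01, h0, h1]; try ring⟩))))))))))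
  have step1 : ∀ ν, G2P x ν → G2P x (refl 1 ν) := by
    intro ν h
    unfold G2P at h ⊢
    rcases h with ⟨h0,h1⟩|⟨h0,h1⟩|⟨h0,h1⟩|⟨h0,h1⟩|⟨h0,h1⟩|⟨h0,h1⟩|⟨h0,h1⟩|⟨h0,h1⟩|⟨h0,h1⟩|⟨h0,h1⟩|⟨h0,h1⟩|⟨h0,h1⟩
    · exact Or.inr (Or.inr (Or.inl ⟨by rw [r10, h0, h1]; try ring, by rw [r11, h1]; try ring⟩))
    · exact Or.inr (Or.inr (Or.inr (Or.inl ⟨by rw [r10, h0, h1]; try ring, by rw [r11, h1]; try ring⟩)))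
    · exact Or.inl ⟨by rw [r10, h0, h1]; try ring, by rw [r11, h1]; try ring⟩
    · exact Or.inr (Or.inl ⟨by rw [r10, h0, h1]; try ring, by rw [r11, h1]; try ring⟩)
    · exact Or.inr (Or.inr (Or.inr (Or.inr (Or.inr (Or.inr (Or.inl ⟨by rw [r10, h0, h1]; try ring, by rw [r11, h1]; try ring⟩))))))
    · exact Or.inr (Or.inr (Or.inr (Or.inr (Or.inr (Or.inr (Or.inr (Or.inl ⟨by rw [r10, h0, h1]; try ring, by rw [r11, h1]; try ring⟩)))))))
    · exact Or.inr (Or.inr (Or.inr (Or.inr (Or.inl ⟨by rw [r10, h0, h1]; try ring, by rw [r11, h1]; try ring⟩))))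
    · exact Or.inr (Or.inr (Or.inr (Or.inr (Or.inr (Or.inl ⟨by rw [r10, h0, h1]; try ring, by rw [r11, h1]; try ring⟩)))))
    · exact Or.inr (Or.inr (Or.inr (Or.inr (Or.inr (Or.inr (Or.inr (Or.inr (Or.inr (Or.inr (Or.inl ⟨by rw [r10, h0, h1]; try ring, by rw [r11, h1]; try ring⟩))))))))))
    · exact Or.inr (Or.inr (Or.inr (Or.inr (Or.inr (Or.inr (Or.inr (Or.inr (Or.inr (Or.inr (Or.inr (⟨by rw [r10, h0, h1]; try ring, by rw [r11, h1]; try ring⟩)))))))))))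
    · exact Or.inr (Or.inr (Or.inr (Or.inr (Or.inr (Or.inr (Or.inr (Or.inr (Or.inl ⟨by rw [r10, h0, h1]; try ring, by rw [r11, h1]; try ring⟩))))))))
    · exact Or.inr (Or.inr (Or.inr (Or.inr (Or.inr (Or.inr (Or.inr (Or.inr (Or.inr (Or.inl ⟨by rw [r10, h0, h1]; try ring, by rw [r11, h1]; try ring⟩)))))))))
  have step : ∀ ν, G2P x ν → ∀ i : Fin 2, G2P x (refl i ν) := by
    intro ν h i
    rcases h2 i with rfl | rfl
    · exact step0 ν h
    · exact step1 ν h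
  have main : ∀ p q, Relation.EqvGen (fun a b => ∃ i, b = refl i a) p q →
      (G2P x p ↔ G2P x q) := by
    intro p q h
    induction h with
    | rel a b hab =>
        rcases hab with ⟨i, rfl⟩
        refine ⟨fun h => step a h i, fun h => ?_⟩
        have := step _ h i
        rwa [hinv] at this
    | refl a => exact Iff.rfl
    | symm a b _ ih => exact ih.symm
    | trans a b c _ _ ih1 ih2 => exact ih1.trans ih2
  have hlamP : G2P x lam := by
    subst hlam
    exact Or.inl ⟨by norm_num, by norm_num⟩
  have hP : G2P x μ := (main lam μ horb).mp hlamP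
  have hd0 := hdom 0
  have hd1 := hdom 1
  unfold G2P at hP
  rcases hP with ⟨h0,h1⟩|⟨h0,h1⟩|⟨h0,h1⟩|⟨h0,h1⟩|⟨h0,h1⟩|⟨h0,h1⟩|⟨h0,h1⟩|⟨h0,h1⟩|⟨h0,h1⟩|⟨h0,h1⟩|⟨h0,h1⟩|⟨h0,h1⟩ <;>
  rw [h0] at hd0 <;> rw [h1] at hd1 <;>
  rw [Fin.exists_fin_two, h0, h1] <;>
  constructor <;>
  first
    | (rintro (h|h) <;> linarith)
    | (intro h; first
        | exact Or.inr (by linarith)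
        | exact Or.inl (by linarith))
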